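/- Fix an integer n ≥ 1, let 𝒫 be the collection of subsets of {1,…,n}, for integers i,j,t let M_{i,j}^t be the real 𝒫×𝒫 matrix with (X,Y) entry 1 if |X| = i, |Y| = j, |X∩Y| = t and 0 otherwise, and for 0 ≤ k ≤ ⌊n/2⌋ let L_k := {b ∈ ℝ^{𝒫} : M_{k−1,k}^{k−1}·b = 0 and b_X = 0 whenever |X| ≠ k}. Define β_{i,j,k}^t := C(n−2k, i−k) · Σ_{p=0}^{t} (−1)^{k−p} C(k,p) C(i−p, t−p) C(n+p−i−k, n+t−i−j). Then for all i, j, k, t ∈ {0,…,n} with k ≤ ⌊n/2⌋ and every b ∈ L_k: C(n−2k, i−k) · M_{i,j}^t · M_{j,k}^k · b = β_{i,j,k}^t · M_{i,k}^k · b. -/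

import Mathlib

open Matrix

/-- Real-valued binomial coefficient `C(a,b)` of integers, equal to `0` whenever `b < 0` or
`b > a`. -/
noncomputable def zchoose (a b : ℤ) : ℝ :=
  if 0 ≤ b ∧ b ≤ a then ((a.toNat).choose b.toNat : ℝ) else 0

/-- The matrix `M_{i,j}^t`, indexed by the subsets of `{1,…,n}`, with `(X,Y)` entry `1` iff
`|X| = i`, `|Y| = j` and `|X ∩ Y| = t`. -/
def Mmat (n : ℕ) (i j t : ℤ) : Matrix (Finset (Fin n)) (Finset (Fin n)) ℝ :=
  Matrix.of fun X Y =>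
    if (X.card : ℤ) = i ∧ (Y.card : ℤ) = j ∧ ((X ∩ Y).card : ℤ) = t then 1 else 0

/-- The set `L_k = {b ∈ ℝ^𝒫 : M_{k−1,k}^{k−1}·b = 0, b_X = 0 whenever |X| ≠ k}`. -/
def Lset (n k : ℕ) : Set (Finset (Fin n) → ℝ) :=
  {b | Mmat n ((k : ℤ) - 1) (k : ℤ) ((k : ℤ) - 1) *ᵥ b = 0 ∧
       ∀ X : Finset (Fin n), X.card ≠ k → b X = 0}

/-- `β_{i,j,k}^t = C(n−2k, i−k) · Σ_{p=0}^{t} (−1)^{k−p} C(k,p) C(i−p, t−p)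
C(n+p−i−k, n+t−i−j)`, binomial coefficients being zero in degenerate ranges. -/
noncomputable def betaCoef (n i j k t : ℕ) : ℝ :=
  zchoose ((n : ℤ) - 2 * k) ((i : ℤ) - k) *
    ∑ p ∈ Finset.range (t + 1),
      (-1 : ℝ) ^ ((k : ℤ) - (p : ℤ)) * zchoose (k : ℤ) (p : ℤ) *
        zchoose ((i : ℤ) - p) ((t : ℤ) - p) *
        zchoose ((n : ℤ) + p - i - k) ((n : ℤ) + t - i - j)

namespace Statement14Aux

open Finset

lemma zchoose_ofNat (a b : ℕ) : zchoose (a : ℤ) (b : ℤ) = (a.choose b : ℝ) := by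
  unfold zchoose
  split
  · simp
  · rename_i h
    have hba : a < b := by push_neg at h; have := h (by positivity); omega
    rw [Nat.choose_eq_zero_of_lt hba]; simp

lemma zchoose_neg {a b : ℤ} (h : b < 0) : zchoose a b = 0 := by
  unfold zchoose; rw [if_neg]; omega

lemma zchoose_gt {a b : ℤ} (h : a < b) : zchoose a b = 0 := by
  unfold zchoose; rw [if_neg]; omega

lemma zchoose_symm (a b : ℤ) : zchoose a b = zchoose a (a - b) := by
  unfold zchoose
  by_cases h : 0 ≤ b ∧ b ≤ a
  · rw [if_pos h, if_pos (by omega)]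
    have h1 : (a - b).toNat = a.toNat - b.toNat := by omega
    rw [h1, Nat.choose_symm (by omega)]
  · rw [if_neg h, if_neg (by omega)]

lemma countY_main {n : ℕ} (X Z : Finset (Fin n)) (i j k t s : ℕ)
    (hX : X.card = i) (hZ : Z.card = k) (hs : (X ∩ Z).card = s)
    (hst : s ≤ t) (hktjs : k + t ≤ j + s) :
    (Finset.univ.filter (fun Y : Finset (Fin n) =>
        Y.card = j ∧ (X ∩ Y).card = t ∧ Z ⊆ Y)).card
      = (i - s).choose (t - s) * (n - (i + k - s)).choose (j + s - (k + t)) := by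
  classical
  have hsk : s ≤ k := by rw [← hs, ← hZ]; exact card_le_card (inter_subset_right)
  have hsi : s ≤ i := by rw [← hs, ← hX]; exact card_le_card (inter_subset_left)
  have hXZ : (X ∪ Z).card = i + k - s := by
    have := Finset.card_union_add_card_inter X Z
    omega
  have hXZn : i + k - s ≤ n := by
    have := (X ∪ Z).card_le_univ
    simp [hXZ, Fintype.card_fin] at this; omega
  have hcompl : ((X ∪ Z)ᶜ).card = n - (i + k - s) := by
    rw [Finset.card_compl, hXZ, Fintype.card_fin]
  have hXsZ : (X \ Z).card = i - s := by
    have := Finset.card_inter_add_card_sdiff X Z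
    omega
  rw [← hXsZ, ← hcompl, ← Finset.card_powersetCard, ← Finset.card_powersetCard,
    ← Finset.card_product]
  apply Finset.card_nbij' (i := fun Y => (Y ∩ (X \ Z), Y \ (X ∪ Z)))
    (j := fun p => Z ∪ p.1 ∪ p.2)
  · rintro Y hY
    simp only [coe_filter, Set.mem_setOf_eq, mem_coe, mem_filter, mem_univ, true_and] at hY
    obtain ⟨hYj, hXYt, hZY⟩ := hY
    simp only [mem_coe, Finset.mem_product, Finset.mem_powersetCard]
    have h1 : Y ∩ (X \ Z) = (X ∩ Y) \ Z := by ext x; simp; tauto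
    have h2 : (X ∩ Y) ∩ Z = X ∩ Z := by
      ext x; simp only [mem_inter]
      have hzy : x ∈ Z → x ∈ Y := fun h => hZY h
      tauto
    have hc1 : (Y ∩ (X \ Z)).card = t - s := by
      rw [h1]
      have := Finset.card_inter_add_card_sdiff (X ∩ Y) Z
      rw [h2, hs, hXYt] at this; omega
    have h3 : Y ∩ (X ∪ Z) = (X ∩ Y) ∪ Z := by
      ext x; simp only [mem_inter, mem_union]
      have hzy : x ∈ Z → x ∈ Y := fun h => hZY h
      tauto
    have hc2 : (Y \ (X ∪ Z)).card = j + s - (k + t) := by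
      have := Finset.card_inter_add_card_sdiff Y (X ∪ Z)
      rw [h3] at this
      have h4 : ((X ∩ Y) ∪ Z).card = t + k - s := by
        have := Finset.card_union_add_card_inter (X ∩ Y) Z
        rw [h2, hs, hXYt, hZ] at this; omega
      rw [h4, hYj] at this; omega
    exact ⟨⟨fun x hx => (mem_inter.mp hx).2, hc1⟩,
           fun x hx => by simpa using (mem_sdiff.mp hx).2, hc2⟩
  · rintro ⟨A, B⟩ hAB
    simp only [mem_coe, coe_product, Set.mem_prod, Finset.mem_product, Finset.mem_powersetCard] at hAB
    obtain ⟨⟨hA, hAc⟩, hB, hBc⟩ := hAB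
    simp only [mem_coe, mem_filter, mem_univ, true_and]
    have hBc' : ∀ x ∈ B, x ∉ X ∧ x ∉ Z := by
      intro x hx; have := hB hx; simp at this; tauto
    have hA' : ∀ x ∈ A, x ∈ X ∧ x ∉ Z := by
      intro x hx; have := hA hx; simp at this; tauto
    have d1 : Disjoint Z A := by
      rw [Finset.disjoint_right]; intro x hx; exact (hA' x hx).2
    have d2 : Disjoint (Z ∪ A) B := by
      rw [Finset.disjoint_right]; intro x hx
      simp only [mem_union]; push_neg
      exact ⟨(hBc' x hx).2, fun h => absurd ((hA' x h).1) (hBc' x hx).1⟩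
    refine ⟨?_, ?_, fun x hx => by simp [hx]⟩
    · rw [card_union_of_disjoint d2, card_union_of_disjoint d1, hZ, hAc, hBc]; omega
    · have : X ∩ (Z ∪ A ∪ B) = (X ∩ Z) ∪ A := by
        ext x; simp only [mem_inter, mem_union]
        constructor
        · rintro ⟨hx, h | h⟩
          · tauto
          · exact absurd hx (hBc' x h).1
        · rintro (⟨h1, h2⟩ | h); exacts [⟨h1, Or.inl (Or.inl h2)⟩, ⟨(hA' x h).1, Or.inl (Or.inr h)⟩]
      rw [this, card_union_of_disjoint, hs, hAc]
      · omega
      · rw [Finset.disjoint_right]; intro x hx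
        simp only [mem_inter]; exact fun h => (hA' x hx).2 h.2
  · rintro Y hY
    simp only [coe_filter, Set.mem_setOf_eq, mem_coe, mem_filter, mem_univ, true_and] at hY
    obtain ⟨hYj, hXYt, hZY⟩ := hY
    ext x
    simp only [mem_union, mem_inter, mem_sdiff]
    constructor
    · rintro ((h | ⟨h, _⟩) | ⟨h, _⟩) <;> first | exact hZY h | exact h
    · intro hx
      by_cases hz : x ∈ Z
      · tauto
      · by_cases hX' : x ∈ X <;> tauto
  · rintro ⟨A, B⟩ hAB
    simp only [mem_coe, coe_product, Set.mem_prod, Finset.mem_product, Finset.mem_powersetCard] at hAB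
    obtain ⟨⟨hA, _⟩, hB, _⟩ := hAB
    have hA' : ∀ x ∈ A, x ∈ X ∧ x ∉ Z := by
      intro x hx; have := hA hx; simp at this; tauto
    have hB' : ∀ x ∈ B, x ∉ X ∧ x ∉ Z := by
      intro x hx; have := hB hx; simp at this; tauto
    simp only [Prod.mk.injEq]
    constructor
    · ext x
      have h1 := fun h => (hA' x h).1
      have h2 := fun h => (hA' x h).2
      have h3 := fun h => (hB' x h).1
      simp only [mem_inter, mem_union, mem_sdiff]
      tauto
    · ext x
      have h1 := fun h => (hA' x h).1
      have h3 := fun h => (hB' x h).1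
      have h4 := fun h => (hB' x h).2
      simp only [mem_sdiff, mem_union]
      tauto

lemma countYR {n : ℕ} (i j k t : ℕ) (X Z : Finset (Fin n))
    (hX : X.card = i) (hZ : Z.card = k) :
    ((Finset.univ.filter (fun Y : Finset (Fin n) =>
        Y.card = j ∧ (X ∩ Y).card = t ∧ Z ⊆ Y)).card : ℝ)
      = zchoose ((i : ℤ) - (X ∩ Z).card) ((t : ℤ) - (X ∩ Z).card)
        * zchoose ((n : ℤ) + (X ∩ Z).card - i - k) ((j : ℤ) - k - t + (X ∩ Z).card) := by
  classical
  set s := (X ∩ Z).card with hs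
  have hsk : s ≤ k := by rw [hs, ← hZ]; exact card_le_card (inter_subset_right)
  have hsi : s ≤ i := by rw [hs, ← hX]; exact card_le_card (inter_subset_left)
  have hXZn : i + k - s ≤ n := by
    have h1 : (X ∪ Z).card = i + k - s := by
      have := Finset.card_union_add_card_inter X Z
      omega
    have := (X ∪ Z).card_le_univ
    simp [h1, Fintype.card_fin] at this; omega
  by_cases h1 : s ≤ t
  · by_cases h2 : k + t ≤ j + s
    · rw [countY_main X Z i j k t s hX hZ rfl h1 h2]
      have e1 : (i : ℤ) - s = ((i - s : ℕ) : ℤ) := by omega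
      have e2 : (t : ℤ) - s = ((t - s : ℕ) : ℤ) := by omega
      have e3 : (n : ℤ) + s - i - k = ((n - (i + k - s) : ℕ) : ℤ) := by omega
      have e4 : (j : ℤ) - k - t + s = ((j + s - (k + t) : ℕ) : ℤ) := by omega
      rw [e1, e2, e3, e4, zchoose_ofNat, zchoose_ofNat]
      push_cast
      ring
    · rw [zchoose_neg (a := (n : ℤ) + s - i - k) (by omega), mul_zero]
      have : Finset.univ.filter (fun Y : Finset (Fin n) =>
          Y.card = j ∧ (X ∩ Y).card = t ∧ Z ⊆ Y) = ∅ := by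
        rw [Finset.filter_eq_empty_iff]
        rintro Y _ ⟨hYj, hXYt, hZY⟩
        have hsub : (X ∩ Y) ∪ Z ⊆ Y := union_subset (inter_subset_right) hZY
        have hle : ((X ∩ Y) ∪ Z).card ≤ j := hYj ▸ card_le_card hsub
        have h2' := Finset.card_union_add_card_inter (X ∩ Y) Z
        have h3 : (X ∩ Y) ∩ Z = X ∩ Z := by
          ext x; simp only [mem_inter]
          have hzy : x ∈ Z → x ∈ Y := fun h => hZY h
          tauto
        rw [h3, hXYt, hZ, ← hs] at h2'
        omega
      rw [this]; simp
  · rw [zchoose_neg (a := (i : ℤ) - s) (by omega), zero_mul]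
    have : Finset.univ.filter (fun Y : Finset (Fin n) =>
        Y.card = j ∧ (X ∩ Y).card = t ∧ Z ⊆ Y) = ∅ := by
      rw [Finset.filter_eq_empty_iff]
      rintro Y _ ⟨hYj, hXYt, hZY⟩
      have : X ∩ Z ⊆ X ∩ Y := inter_subset_inter (Finset.Subset.refl X) hZY
      have := card_le_card this
      rw [hXYt, ← hs] at this
      omega
    rw [this]; simp

noncomputable def Fsum {n : ℕ} (k : ℕ) (b : Finset (Fin n) → ℝ) (X : Finset (Fin n)) (s : ℕ) : ℝ :=
  ∑ Z ∈ Finset.univ.filter (fun Z : Finset (Fin n) => Z.card = k ∧ (X ∩ Z).card = s), b Z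

lemma countW' {n : ℕ} (X Z : Finset (Fin n)) (k r : ℕ) (hZ : Z.card = k) (hr : r + 1 ≤ k) :
    (Finset.univ.filter (fun W : Finset (Fin n) =>
        W.card + 1 = k ∧ (X ∩ W).card = r ∧ W ⊆ Z)).card
      = (if (X ∩ Z).card = r then k - r else 0)
        + (if (X ∩ Z).card = r + 1 then r + 1 else 0) := by
  classical
  have himg : Finset.univ.filter (fun W : Finset (Fin n) =>
        W.card + 1 = k ∧ (X ∩ W).card = r ∧ W ⊆ Z)
      = (Z.filter (fun x => (X ∩ Z.erase x).card = r)).image Z.erase := by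
    ext W
    simp only [mem_filter, mem_univ, true_and, mem_image]
    constructor
    · rintro ⟨hWc, hXW, hWZ⟩
      have hcd : (Z \ W).card = 1 := by
        rw [card_sdiff_of_subset hWZ]; omega
      obtain ⟨x, hx⟩ := Finset.card_eq_one.mp hcd
      have hxZ : x ∈ Z := by
        have : x ∈ Z \ W := by rw [hx]; exact mem_singleton_self x
        exact (mem_sdiff.mp this).1
      have hW : Z.erase x = W := by
        rw [← Finset.sdiff_singleton_eq_erase, ← hx, Finset.sdiff_sdiff_eq_self hWZ]
      exact ⟨x, ⟨hxZ, by rw [hW, hXW]⟩, hW⟩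
    · rintro ⟨x, ⟨hxZ, hcard⟩, rfl⟩
      refine ⟨by rw [card_erase_of_mem hxZ]; omega, hcard, erase_subset x Z⟩
  rw [himg, Finset.card_image_of_injOn
    (Finset.erase_injOn Z |>.mono (by intro x hx; exact mem_coe.mpr (mem_of_mem_filter x hx)))]
  have hXe : ∀ x, X ∩ Z.erase x = (X ∩ Z).erase x := by
    intro x; ext y; simp only [mem_inter, mem_erase]; tauto
  have hfil : ∀ x ∈ Z, ((X ∩ Z.erase x).card = r ↔
      (if x ∈ X then (X ∩ Z).card = r + 1 else (X ∩ Z).card = r)) := by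
    intro x hxZ
    rw [hXe]
    by_cases hxX : x ∈ X
    · have hm : x ∈ X ∩ Z := mem_inter.mpr ⟨hxX, hxZ⟩
      rw [card_erase_of_mem hm, if_pos hxX]
      have : 1 ≤ (X ∩ Z).card := card_pos.mpr ⟨x, hm⟩
      omega
    · have hm : x ∉ X ∩ Z := fun h => hxX (mem_inter.mp h).1
      rw [erase_eq_of_notMem hm, if_neg hxX]
  rw [Finset.filter_congr hfil]
  by_cases h1 : (X ∩ Z).card = r
  · have h2 : (X ∩ Z).card ≠ r + 1 := by omega
    rw [if_pos h1, if_neg h2]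
    have : Z.filter (fun x => if x ∈ X then (X ∩ Z).card = r + 1 else (X ∩ Z).card = r)
        = Z \ X := by
      ext x; simp only [mem_filter, mem_sdiff]
      by_cases hx : x ∈ X <;> simp [hx, h1, h2]
    rw [this]
    have := Finset.card_inter_add_card_sdiff Z X
    have hi : (Z ∩ X).card = r := by rw [Finset.inter_comm]; exact h1
    omega
  · rw [if_neg h1]
    by_cases h2 : (X ∩ Z).card = r + 1
    · rw [if_pos h2]
      have : Z.filter (fun x => if x ∈ X then (X ∩ Z).card = r + 1 else (X ∩ Z).card = r)
          = Z ∩ X := by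
        ext x; simp only [mem_filter, mem_inter]
        by_cases hx : x ∈ X <;> simp [hx, h1, h2]
      rw [this, Finset.inter_comm, h2]; omega
    · rw [if_neg h2]
      have : Z.filter (fun x => if x ∈ X then (X ∩ Z).card = r + 1 else (X ∩ Z).card = r)
          = ∅ := by
        rw [Finset.filter_eq_empty_iff]
        intro x _
        by_cases hx : x ∈ X <;> simp [hx, h1, h2]
      rw [this]; simp

lemma Frec {n k : ℕ} (b : Finset (Fin n) → ℝ)
    (hker : ∀ W : Finset (Fin n), W.card + 1 = k →
      ∑ Z ∈ Finset.univ.filter (fun Z : Finset (Fin n) => Z.card = k ∧ W ⊆ Z), b Z = 0)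
    (X : Finset (Fin n)) (r : ℕ) (hr : r + 1 ≤ k) :
    ((k - r : ℕ) : ℝ) * Fsum k b X r + ((r + 1 : ℕ) : ℝ) * Fsum k b X (r + 1) = 0 := by
  classical
  have step1 : ∑ W ∈ Finset.univ.filter
        (fun W : Finset (Fin n) => W.card + 1 = k ∧ (X ∩ W).card = r),
      ∑ Z ∈ Finset.univ.filter (fun Z : Finset (Fin n) => Z.card = k ∧ W ⊆ Z), b Z = 0 :=
    Finset.sum_eq_zero fun W hW => hker W (mem_filter.mp hW).2.1
  have step2 : ∑ W ∈ Finset.univ.filter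
        (fun W : Finset (Fin n) => W.card + 1 = k ∧ (X ∩ W).card = r),
      ∑ Z ∈ Finset.univ.filter (fun Z : Finset (Fin n) => Z.card = k ∧ W ⊆ Z), b Z
      = ∑ Z ∈ Finset.univ.filter (fun Z : Finset (Fin n) => Z.card = k),
          ((Finset.univ.filter (fun W : Finset (Fin n) =>
              W.card + 1 = k ∧ (X ∩ W).card = r ∧ W ⊆ Z)).card : ℝ) * b Z := by
    rw [Finset.sum_filter, Finset.sum_filter]
    have lhs_eq : ∀ W : Finset (Fin n),
        (if W.card + 1 = k ∧ (X ∩ W).card = r then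
          ∑ Z ∈ Finset.univ.filter (fun Z : Finset (Fin n) => Z.card = k ∧ W ⊆ Z), b Z
         else 0)
        = ∑ Z : Finset (Fin n),
            (if W.card + 1 = k ∧ (X ∩ W).card = r ∧ Z.card = k ∧ W ⊆ Z then b Z else 0) := by
      intro W
      by_cases hP : W.card + 1 = k ∧ (X ∩ W).card = r
      · rw [if_pos hP, Finset.sum_filter]
        exact Finset.sum_congr rfl fun Z _ => by
          by_cases h : Z.card = k ∧ W ⊆ Z
          · rw [if_pos h, if_pos ⟨hP.1, hP.2, h⟩]
          · rw [if_neg h, if_neg (by tauto)]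
      · rw [if_neg hP]
        exact (Finset.sum_eq_zero fun Z _ => if_neg (by tauto)).symm
    rw [Finset.sum_congr rfl fun W _ => lhs_eq W, Finset.sum_comm]
    apply Finset.sum_congr rfl
    intro Z _
    by_cases hZ : Z.card = k
    · rw [if_pos hZ]
      have : ∀ W : Finset (Fin n),
          (if W.card + 1 = k ∧ (X ∩ W).card = r ∧ Z.card = k ∧ W ⊆ Z then b Z else 0)
          = (if W.card + 1 = k ∧ (X ∩ W).card = r ∧ W ⊆ Z then b Z else 0) := by
        intro W
        by_cases h : W.card + 1 = k ∧ (X ∩ W).card = r ∧ W ⊆ Z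
        · rw [if_pos h, if_pos ⟨h.1, h.2.1, hZ, h.2.2⟩]
        · rw [if_neg (by tauto), if_neg h]
      have e := Finset.sum_filter (s := (Finset.univ : Finset (Finset (Fin n))))
        (fun W : Finset (Fin n) => W.card + 1 = k ∧ (X ∩ W).card = r ∧ W ⊆ Z)
        (fun _ : Finset (Fin n) => b Z)
      rw [Finset.sum_congr rfl fun W _ => this W, ← e, Finset.sum_const, nsmul_eq_mul]
    · rw [if_neg hZ]
      exact Finset.sum_eq_zero fun W _ => if_neg (by tauto)
  have step3 : ∑ Z ∈ Finset.univ.filter (fun Z : Finset (Fin n) => Z.card = k),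
          ((Finset.univ.filter (fun W : Finset (Fin n) =>
              W.card + 1 = k ∧ (X ∩ W).card = r ∧ W ⊆ Z)).card : ℝ) * b Z
      = ((k - r : ℕ) : ℝ) * Fsum k b X r + ((r + 1 : ℕ) : ℝ) * Fsum k b X (r + 1) := by
    have expand : ∀ Z ∈ Finset.univ.filter (fun Z : Finset (Fin n) => Z.card = k),
        ((Finset.univ.filter (fun W : Finset (Fin n) =>
            W.card + 1 = k ∧ (X ∩ W).card = r ∧ W ⊆ Z)).card : ℝ) * b Z
        = (if (X ∩ Z).card = r then ((k - r : ℕ) : ℝ) * b Z else 0)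
          + (if (X ∩ Z).card = r + 1 then ((r + 1 : ℕ) : ℝ) * b Z else 0) := by
      intro Z hZ
      rw [countW' X Z k r (mem_filter.mp hZ).2 hr]
      push_cast
      by_cases h1 : (X ∩ Z).card = r
      · have h2 : (X ∩ Z).card ≠ r + 1 := by omega
        simp [h1, h2]
      · by_cases h2 : (X ∩ Z).card = r + 1
        · simp [h1, h2]
        · simp [h1, h2]
    rw [Finset.sum_congr rfl expand, Finset.sum_add_distrib]
    congr 1
    · rw [← Finset.sum_filter, Finset.filter_filter, Fsum, Finset.mul_sum]
    · rw [← Finset.sum_filter, Finset.filter_filter, Fsum, Finset.mul_sum]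
  rw [step2, step3] at step1
  exact step1

lemma Fdown {n k : ℕ} (b : Finset (Fin n) → ℝ)
    (hker : ∀ W : Finset (Fin n), W.card + 1 = k →
      ∑ Z ∈ Finset.univ.filter (fun Z : Finset (Fin n) => Z.card = k ∧ W ⊆ Z), b Z = 0)
    (X : Finset (Fin n)) (s : ℕ) (hs : s ≤ k) :
    Fsum k b X s = (-1 : ℝ) ^ (k - s) * (k.choose s : ℝ) * Fsum k b X k := by
  obtain ⟨d, hd⟩ : ∃ d, s + d = k := ⟨k - s, by omega⟩
  clear hs
  induction d generalizing s with
  | zero =>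
    have : s = k := by omega
    subst this
    simp
  | succ d ih =>
    have ihs := ih (s + 1) (by omega)
    have hrec := Frec b hker X s (by omega)
    have hkr : ((k - s : ℕ) : ℝ) ≠ 0 := Nat.cast_ne_zero.mpr (by omega)
    apply mul_left_cancel₀ hkr
    have hFs : ((k - s : ℕ) : ℝ) * Fsum k b X s
        = -(((s + 1 : ℕ) : ℝ) * Fsum k b X (s + 1)) := by linarith
    rw [hFs, ihs]
    have hchoose : (k.choose (s + 1) : ℝ) * ((s + 1 : ℕ) : ℝ)
        = (k.choose s : ℝ) * ((k - s : ℕ) : ℝ) := by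
      exact_mod_cast congrArg (fun m : ℕ => (m : ℝ)) (Nat.choose_succ_right_eq k s)
    have hpow : (-1 : ℝ) ^ (k - s) = -(-1 : ℝ) ^ (k - (s + 1)) := by
      have h : k - s = (k - (s + 1)) + 1 := by omega
      rw [h, pow_succ]; ring
    rw [hpow]
    push_cast at hchoose ⊢
    linear_combination (-((-1 : ℝ) ^ (k - (s + 1))) * Fsum k b X k) * hchoose

lemma scalar_sum (n i j k t : ℕ) :
    (∑ s ∈ Finset.range (k + 1),
      zchoose ((i : ℤ) - s) ((t : ℤ) - s)
        * zchoose ((n : ℤ) + s - i - k) ((j : ℤ) - k - t + s)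
        * ((-1 : ℝ) ^ (k - s) * (k.choose s : ℝ)))
    = ∑ p ∈ Finset.range (t + 1),
      (-1 : ℝ) ^ ((k : ℤ) - (p : ℤ)) * zchoose (k : ℤ) (p : ℤ) *
        zchoose ((i : ℤ) - p) ((t : ℤ) - p) *
        zchoose ((n : ℤ) + p - i - k) ((n : ℤ) + t - i - j) := by
  have hterm : ∀ s, s ≤ k →
      zchoose ((i : ℤ) - s) ((t : ℤ) - s)
        * zchoose ((n : ℤ) + s - i - k) ((j : ℤ) - k - t + s)
        * ((-1 : ℝ) ^ (k - s) * (k.choose s : ℝ))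
      = (-1 : ℝ) ^ ((k : ℤ) - (s : ℤ)) * zchoose (k : ℤ) (s : ℤ) *
          zchoose ((i : ℤ) - s) ((t : ℤ) - s) *
          zchoose ((n : ℤ) + s - i - k) ((n : ℤ) + t - i - j) := by
    intro s hsk
    have e1 : zchoose ((n : ℤ) + s - i - k) ((j : ℤ) - k - t + s)
        = zchoose ((n : ℤ) + s - i - k) ((n : ℤ) + t - i - j) := by
      rw [zchoose_symm]
      congr 1
      ring
    have e2 : (-1 : ℝ) ^ ((k : ℤ) - (s : ℤ)) = (-1 : ℝ) ^ (k - s) := by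
      rw [show (k : ℤ) - (s : ℤ) = ((k - s : ℕ) : ℤ) by omega, zpow_natCast]
    have e3 : zchoose (k : ℤ) (s : ℤ) = (k.choose s : ℝ) := zchoose_ofNat k s
    rw [e1, e2, e3]
    ring
  -- both sides equal the sum over range (k + t + 1) of the common term
  have hL : (∑ s ∈ Finset.range (k + 1),
      zchoose ((i : ℤ) - s) ((t : ℤ) - s)
        * zchoose ((n : ℤ) + s - i - k) ((j : ℤ) - k - t + s)
        * ((-1 : ℝ) ^ (k - s) * (k.choose s : ℝ)))
      = ∑ s ∈ Finset.range (k + t + 1),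
        (-1 : ℝ) ^ ((k : ℤ) - (s : ℤ)) * zchoose (k : ℤ) (s : ℤ) *
          zchoose ((i : ℤ) - s) ((t : ℤ) - s) *
          zchoose ((n : ℤ) + s - i - k) ((n : ℤ) + t - i - j) := by
    rw [Finset.sum_congr rfl (fun s hs => hterm s (by
      simp only [Finset.mem_range] at hs; omega))]
    apply Finset.sum_subset (by intro x hx; simp only [Finset.mem_range] at *; omega)
    intro s _ hs
    simp only [Finset.mem_range, not_lt] at hs
    rw [zchoose_gt (a := (k : ℤ)) (b := (s : ℤ)) (by omega)]
    ring
  have hR : (∑ p ∈ Finset.range (t + 1),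
      (-1 : ℝ) ^ ((k : ℤ) - (p : ℤ)) * zchoose (k : ℤ) (p : ℤ) *
        zchoose ((i : ℤ) - p) ((t : ℤ) - p) *
        zchoose ((n : ℤ) + p - i - k) ((n : ℤ) + t - i - j))
      = ∑ s ∈ Finset.range (k + t + 1),
        (-1 : ℝ) ^ ((k : ℤ) - (s : ℤ)) * zchoose (k : ℤ) (s : ℤ) *
          zchoose ((i : ℤ) - s) ((t : ℤ) - s) *
          zchoose ((n : ℤ) + s - i - k) ((n : ℤ) + t - i - j) := by
    apply Finset.sum_subset (by intro x hx; simp only [Finset.mem_range] at *; omega)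
    intro s _ hs
    simp only [Finset.mem_range, not_lt] at hs
    rw [zchoose_neg (a := (i : ℤ) - s) (by omega)]
    ring
  rw [hL, hR]

end Statement14Aux

open Statement14Aux Finset

theorem statement14 (n : ℕ) (hn : 1 ≤ n) (i j k t : ℕ)
    (hi : i ≤ n) (hj : j ≤ n) (ht : t ≤ n) (hkn : k ≤ n) (hk : k ≤ n / 2)
    (b : Finset (Fin n) → ℝ) (hb : b ∈ Lset n k) :
    zchoose ((n : ℤ) - 2 * k) ((i : ℤ) - k) •
        ((Mmat n (i : ℤ) (j : ℤ) (t : ℤ) * Mmat n (j : ℤ) (k : ℤ) (k : ℤ)) *ᵥ b)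
      = betaCoef n i j k t • (Mmat n (i : ℤ) (k : ℤ) (k : ℤ) *ᵥ b) := by
  classical
  obtain ⟨hker0, hb0⟩ := hb
  have hker : ∀ W : Finset (Fin n), W.card + 1 = k →
      ∑ Z ∈ Finset.univ.filter (fun Z : Finset (Fin n) => Z.card = k ∧ W ⊆ Z), b Z = 0 := by
    intro W hW
    have h0 := congrFun hker0 W
    simp only [Matrix.mulVec, dotProduct, Mmat, Matrix.of_apply, Pi.zero_apply] at h0
    rw [Finset.sum_filter]
    refine Eq.trans ?_ h0
    apply Finset.sum_congr rfl
    intro Z _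
    by_cases h : Z.card = k ∧ W ⊆ Z
    · rw [if_pos h, if_pos ?_, one_mul]
      refine ⟨by push_cast; omega, by exact_mod_cast h.1, ?_⟩
      rw [Finset.inter_eq_left.mpr h.2]
      push_cast; omega
    · have hneg : ¬ (((W.card : ℤ) = (k : ℤ) - 1) ∧ ((Z.card : ℤ) = (k : ℤ))
          ∧ (((W ∩ Z).card : ℤ) = (k : ℤ) - 1)) := by
        rintro ⟨hc1, hc2, hc3⟩
        apply h
        have hZk : Z.card = k := by exact_mod_cast hc2
        refine ⟨hZk, ?_⟩
        have hWZ : (W ∩ Z).card = W.card := by omega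
        have := Finset.eq_of_subset_of_card_le (Finset.inter_subset_left : W ∩ Z ⊆ W)
          (by omega)
        exact Finset.inter_eq_left.mp this
      rw [if_neg h, if_neg hneg, zero_mul]
  funext X
  simp only [Pi.smul_apply, smul_eq_mul]
  by_cases hXi : X.card = i
  case neg =>
    have hXi' : ¬ ((X.card : ℤ) = (i : ℤ)) := by exact_mod_cast hXi
    simp [Matrix.mulVec, Matrix.mul_apply, dotProduct, Mmat, hXi', hXi]
  case pos =>
    have hXi' : (X.card : ℤ) = (i : ℤ) := by exact_mod_cast hXi
    -- RHS vector entry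
    have hRHS : (Mmat n (i : ℤ) (k : ℤ) (k : ℤ) *ᵥ b) X = Fsum k b X k := by
      simp only [Matrix.mulVec, dotProduct, Mmat, Matrix.of_apply]
      rw [Fsum, Finset.sum_filter]
      apply Finset.sum_congr rfl
      intro Z _
      by_cases h : Z.card = k ∧ (X ∩ Z).card = k
      · rw [if_pos ⟨hXi', by exact_mod_cast h.1, by exact_mod_cast h.2⟩, if_pos h, one_mul]
      · rw [if_neg ?_, if_neg h, zero_mul]
        rintro ⟨_, hc2, hc3⟩
        exact h ⟨by exact_mod_cast hc2, by exact_mod_cast hc3⟩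
    -- LHS vector entry
    have hmul : ∀ Z : Finset (Fin n),
        (∑ Y : Finset (Fin n), Mmat n (i : ℤ) (j : ℤ) (t : ℤ) X Y
          * Mmat n (j : ℤ) (k : ℤ) (k : ℤ) Y Z)
        = if Z.card = k then
            ((Finset.univ.filter (fun Y : Finset (Fin n) =>
              Y.card = j ∧ (X ∩ Y).card = t ∧ Z ⊆ Y)).card : ℝ)
          else 0 := by
      intro Z
      by_cases hZ : Z.card = k
      · rw [if_pos hZ, ← Finset.sum_boole]
        apply Finset.sum_congr rfl
        intro Y _
        simp only [Mmat, Matrix.of_apply]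
        by_cases h : Y.card = j ∧ (X ∩ Y).card = t ∧ Z ⊆ Y
        · have hc2 : (X.card : ℤ) = (i : ℤ) ∧ ((Y.card : ℤ) = (j : ℤ))
              ∧ (((X ∩ Y).card : ℤ) = (t : ℤ)) :=
            ⟨hXi', by exact_mod_cast h.1, by exact_mod_cast h.2.1⟩
          have hc3 : ((Y.card : ℤ) = (j : ℤ)) ∧ ((Z.card : ℤ) = (k : ℤ))
              ∧ (((Y ∩ Z).card : ℤ) = (k : ℤ)) := by
            refine ⟨by exact_mod_cast h.1, by exact_mod_cast hZ, ?_⟩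
            rw [Finset.inter_eq_right.mpr h.2.2]
            exact_mod_cast hZ
          rw [if_pos h, if_pos hc2, if_pos hc3, one_mul]
        · rw [if_neg h]
          by_cases h1 : (X.card : ℤ) = (i : ℤ) ∧ (Y.card : ℤ) = (j : ℤ)
              ∧ ((X ∩ Y).card : ℤ) = (t : ℤ)
          · have hneg : ¬ (((Y.card : ℤ) = (j : ℤ)) ∧ ((Z.card : ℤ) = (k : ℤ))
                ∧ (((Y ∩ Z).card : ℤ) = (k : ℤ))) := by
              rintro ⟨hc1, hc2, hc3⟩
              apply h
              have hYZ : (Y ∩ Z).card = Z.card := by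
                have : ((Y ∩ Z).card : ℤ) = (k : ℤ) := hc3
                omega
              have := Finset.eq_of_subset_of_card_le
                (Finset.inter_subset_right : Y ∩ Z ⊆ Z) (by omega)
              exact ⟨by exact_mod_cast h1.2.1, by exact_mod_cast h1.2.2,
                Finset.inter_eq_right.mp this⟩
            rw [if_pos h1, one_mul, if_neg hneg]
          · rw [if_neg h1, zero_mul]
      · rw [if_neg hZ]
        apply Finset.sum_eq_zero
        intro Y _
        simp only [Mmat, Matrix.of_apply]
        have hneg : ¬ (((Y.card : ℤ) = (j : ℤ)) ∧ ((Z.card : ℤ) = (k : ℤ))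
            ∧ (((Y ∩ Z).card : ℤ) = (k : ℤ))) := by
          rintro ⟨_, hc2, _⟩
          exact hZ (by exact_mod_cast hc2)
        rw [if_neg hneg, mul_zero]
    have hLHS : ((Mmat n (i : ℤ) (j : ℤ) (t : ℤ) * Mmat n (j : ℤ) (k : ℤ) (k : ℤ)) *ᵥ b) X
        = ∑ Z ∈ Finset.univ.filter (fun Z : Finset (Fin n) => Z.card = k),
            (zchoose ((i : ℤ) - (X ∩ Z).card) ((t : ℤ) - (X ∩ Z).card)
              * zchoose ((n : ℤ) + (X ∩ Z).card - i - k)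
                  ((j : ℤ) - k - t + (X ∩ Z).card)) * b Z := by
      simp only [Matrix.mulVec, dotProduct, Matrix.mul_apply]
      rw [Finset.sum_filter]
      apply Finset.sum_congr rfl
      intro Z _
      rw [hmul Z]
      by_cases hZ : Z.card = k
      · rw [if_pos hZ, if_pos hZ, countYR i j k t X Z hXi hZ]
      · rw [if_neg hZ, if_neg hZ, zero_mul]
    -- regroup by intersection size
    have hgroup : ∑ Z ∈ Finset.univ.filter (fun Z : Finset (Fin n) => Z.card = k),
            (zchoose ((i : ℤ) - (X ∩ Z).card) ((t : ℤ) - (X ∩ Z).card)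
              * zchoose ((n : ℤ) + (X ∩ Z).card - i - k)
                  ((j : ℤ) - k - t + (X ∩ Z).card)) * b Z
        = ∑ s ∈ Finset.range (k + 1),
            (zchoose ((i : ℤ) - s) ((t : ℤ) - s)
              * zchoose ((n : ℤ) + s - i - k) ((j : ℤ) - k - t + s)) * Fsum k b X s := by
      have expand : ∀ s : ℕ,
          (zchoose ((i : ℤ) - s) ((t : ℤ) - s)
            * zchoose ((n : ℤ) + s - i - k) ((j : ℤ) - k - t + s)) * Fsum k b X s
          = ∑ Z ∈ Finset.univ.filter (fun Z : Finset (Fin n) => Z.card = k),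
              (if (X ∩ Z).card = s then
                (zchoose ((i : ℤ) - s) ((t : ℤ) - s)
                  * zchoose ((n : ℤ) + s - i - k) ((j : ℤ) - k - t + s)) * b Z
               else 0) := by
        intro s
        rw [Fsum, Finset.mul_sum, ← Finset.filter_filter, Finset.sum_filter]
      rw [Finset.sum_congr rfl fun s _ => expand s, Finset.sum_comm]
      apply Finset.sum_congr rfl
      intro Z hZ
      have hZk : Z.card = k := (mem_filter.mp hZ).2
      have hmem : (X ∩ Z).card ∈ Finset.range (k + 1) := by
        simp only [Finset.mem_range]
        have : (X ∩ Z).card ≤ Z.card := card_le_card inter_subset_right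
        omega
      rw [Finset.sum_ite_eq (Finset.range (k + 1)) ((X ∩ Z).card)
        (fun s => (zchoose ((i : ℤ) - s) ((t : ℤ) - s)
          * zchoose ((n : ℤ) + s - i - k) ((j : ℤ) - k - t + s)) * b Z), if_pos hmem]
    -- apply Fdown
    have happly : ∑ s ∈ Finset.range (k + 1),
            (zchoose ((i : ℤ) - s) ((t : ℤ) - s)
              * zchoose ((n : ℤ) + s - i - k) ((j : ℤ) - k - t + s)) * Fsum k b X s
        = (∑ s ∈ Finset.range (k + 1),
            zchoose ((i : ℤ) - s) ((t : ℤ) - s)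
              * zchoose ((n : ℤ) + s - i - k) ((j : ℤ) - k - t + s)
              * ((-1 : ℝ) ^ (k - s) * (k.choose s : ℝ))) * Fsum k b X k := by
      rw [Finset.sum_mul]
      apply Finset.sum_congr rfl
      intro s hs
      rw [Fdown b hker X s (by simp only [Finset.mem_range] at hs; omega)]
      ring
    rw [hLHS, hgroup, happly, hRHS, scalar_sum n i j k t, betaCoef]
    ring
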